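/- Let ι be a finite nonempty index set and 𝒳 a type of records, and model datasets as functions D : ι → 𝒳. Let d ≥ 1, let f : (ι → 𝒳) → (Fin d → ℝ) be a vector-valued query, let ε > 0 and Δ > 0, and assume the L1-sensitivity bound ∑_{k=0}^{d−1} |f(D)_k − f(D′)_k| ≤ Δ for all neighbouring datasets D, D′. For each dataset D, let μ_D be the product probability measure on Fin d → ℝ whose k-th factor has density x ↦ (ε/(2Δ))·exp(−ε·|x − f(D)_k|/Δ) with respect to Lebesgue measure (i.e., independent Lap(Δ/ε) noise is added to each coordinate of f(D)). Then this mechanism satisfies ε-differential privacy: for all neighbouring datasets D, D′ and every measurable set S ⊆ (Fin d → ℝ), μ_D(S) ≤ exp(ε)·μ_{D′}(S). -/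

import Mathlib

open MeasureTheory
open scoped ENNReal

/-- Two datasets are neighbouring if they differ at exactly one index. -/
def Neighbouring {ι 𝒳 : Type*} (D D' : ι → 𝒳) : Prop :=
  ∃ i, D i ≠ D' i ∧ ∀ j, j ≠ i → D j = D' j

/-- The vector-valued Laplace mechanism: independent `Lap(Δ/ε)` noise is added to every
coordinate of `f D`, i.e. the product measure on `Fin d → ℝ` whose `k`-th factor has
density `x ↦ (ε/(2Δ)) · exp (-ε·|x - (f D) k|/Δ)` with respect to Lebesgue measure. -/
noncomputable def laplaceMechanismVec {ι 𝒳 : Type*} (d : ℕ)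
    (f : (ι → 𝒳) → (Fin d → ℝ)) (ε Δ : ℝ) (D : ι → 𝒳) : Measure (Fin d → ℝ) :=
  Measure.pi fun k =>
    volume.withDensity fun x =>
      ENNReal.ofReal ((ε / (2 * Δ)) * Real.exp (-(ε * |x - f D k|) / Δ))

/-- `lintegral` of a product of one-variable functions over a finite product measure. -/
lemma lintegral_pi_prod_aux {α : Type*} [MeasurableSpace α] :
    ∀ (n : ℕ) (μ : Fin n → Measure α), (∀ i, SigmaFinite (μ i)) →
      ∀ (h : Fin n → α → ℝ≥0∞), (∀ i, Measurable (h i)) →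
      ∫⁻ x, ∏ i, h i (x i) ∂Measure.pi μ = ∏ i, ∫⁻ x, h i x ∂μ i := by
  intro n
  induction n with
  | zero =>
    intro μ _ h _
    simp [MeasureTheory.Measure.pi_of_empty, lintegral_dirac]
  | succ n ih =>
    intro μ hσ h hm
    haveI := hσ
    have hmp := measurePreserving_piFinSuccAbove μ 0
    set e := MeasurableEquiv.piFinSuccAbove (fun _ : Fin (n + 1) => α) 0 with he
    have key : ∫⁻ p, h 0 p.1 * ∏ j, h (Fin.succAbove 0 j) (p.2 j)
          ∂((μ 0).prod (Measure.pi fun j => μ (Fin.succAbove 0 j)))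
        = ∫⁻ x, ∏ i, h i (x i) ∂Measure.pi μ := by
      rw [hmp.lintegral_map_equiv (fun p => h 0 p.1 * ∏ j, h (Fin.succAbove 0 j) (p.2 j)) e]
      congr 1
      ext x
      rw [Fin.prod_univ_succ]
      simp only [he, MeasurableEquiv.piFinSuccAbove, MeasurableEquiv.coe_mk,
        Equiv.coe_fn_mk]
      rfl
    have hGm : Measurable fun y : Fin n → α => ∏ j, h (Fin.succAbove 0 j) (y j) :=
      Finset.measurable_prod _ fun j _ => (hm _).comp (measurable_pi_apply j)
    rw [← key, lintegral_prod_mul (hm 0).aemeasurable hGm.aemeasurable]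
    rw [ih (fun j => μ (Fin.succAbove 0 j)) (fun j => hσ _)
      (fun j => h (Fin.succAbove 0 j)) (fun j => hm _)]
    rw [Fin.prod_univ_succ]
    rfl

/-- The vector-valued Laplace mechanism satisfies `ε`-differential privacy: if the query
`f` has L1-sensitivity at most `Δ` over neighbouring datasets, then for all neighbouring
`D, D'` and every measurable `S ⊆ (Fin d → ℝ)`, `μ_D(S) ≤ exp ε · μ_{D'}(S)`. -/
theorem laplaceMechanismVec_dp {ι 𝒳 : Type*} [Fintype ι] [Nonempty ι]
    (d : ℕ) (hd : 1 ≤ d) (f : (ι → 𝒳) → (Fin d → ℝ)) (ε Δ : ℝ)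
    (hε : 0 < ε) (hΔ : 0 < Δ)
    (hsens : ∀ D D' : ι → 𝒳, Neighbouring D D' →
      (∑ k : Fin d, |f D k - f D' k|) ≤ Δ) :
    ∀ D D' : ι → 𝒳, Neighbouring D D' → ∀ S : Set (Fin d → ℝ), MeasurableSet S →
      laplaceMechanismVec d f ε Δ D S ≤
        ENNReal.ofReal (Real.exp ε) * laplaceMechanismVec d f ε Δ D' S := by
  intro D D' hN S hS
  -- densities
  set g : (ι → 𝒳) → Fin d → ℝ → ℝ≥0∞ := fun E k x =>
    ENNReal.ofReal ((ε / (2 * Δ)) * Real.exp (-(ε * |x - f E k|) / Δ)) with hg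
  have hgm : ∀ E k, Measurable (g E k) := by
    intro E k
    apply Measurable.ennreal_ofReal
    exact (measurable_const.mul ((((measurable_id.sub measurable_const).abs.const_mul
      ε).neg.div_const Δ).exp))
  have hpi : ∀ E : ι → 𝒳, laplaceMechanismVec d f ε Δ E =
      (Measure.pi fun _ : Fin d => (volume : Measure ℝ)).withDensity
        (fun x => ∏ k, g E k (x k)) := by
    intro E
    have hσ : ∀ k : Fin d, SigmaFinite ((volume : Measure ℝ).withDensity (g E k)) := by
      intro k
      exact SigmaFinite.withDensity_of_ne_top
        (Filter.Eventually.of_forall fun x => ENNReal.ofReal_ne_top)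
    haveI := hσ
    rw [laplaceMechanismVec]
    apply Measure.pi_eq
    intro s hs
    rw [withDensity_apply _ (MeasurableSet.univ_pi hs)]
    have : ∫⁻ x in Set.pi Set.univ s, ∏ k, g E k (x k)
          ∂(Measure.pi fun _ : Fin d => (volume : Measure ℝ))
        = ∫⁻ x, ∏ k, (s k).indicator (g E k) (x k)
          ∂(Measure.pi fun _ : Fin d => (volume : Measure ℝ)) := by
      rw [← lintegral_indicator (MeasurableSet.univ_pi hs)]
      congr 1
      ext x
      by_cases hx : x ∈ Set.pi Set.univ s
      · rw [Set.indicator_of_mem hx]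
        exact Finset.prod_congr rfl fun k _ =>
          (Set.indicator_of_mem (hx k (Set.mem_univ k)) _).symm
      · rw [Set.indicator_of_notMem hx]
        rw [Set.mem_univ_pi] at hx
        push_neg at hx
        obtain ⟨k, hk⟩ := hx
        exact (Finset.prod_eq_zero (Finset.mem_univ k)
          (Set.indicator_of_notMem hk _)).symm
    rw [this, lintegral_pi_prod_aux d _ (fun _ => inferInstance) _
      (fun k => (hgm E k).indicator (hs k))]
    refine Finset.prod_congr rfl fun k _ => ?_
    rw [lintegral_indicator (hs k), withDensity_apply _ (hs k)]
  -- pointwise density bound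
  have hpt : ∀ x : Fin d → ℝ,
      (∏ k, g D k (x k)) ≤ ENNReal.ofReal (Real.exp ε) * ∏ k, g D' k (x k) := by
    intro x
    have h1 : ∀ k, g D k (x k) ≤
        ENNReal.ofReal (Real.exp (ε * |f D k - f D' k| / Δ)) * g D' k (x k) := by
      intro k
      rw [hg]
      simp only
      rw [← ENNReal.ofReal_mul (Real.exp_nonneg _)]
      apply ENNReal.ofReal_le_ofReal
      rw [mul_comm (Real.exp _), mul_assoc, ← Real.exp_add]
      apply mul_le_mul_of_nonneg_left _ (by positivity)
      apply Real.exp_le_exp.mpr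
      have habs : |x k - f D k| ≥ |x k - f D' k| - |f D k - f D' k| := by
        have := abs_sub_abs_le_abs_sub (x k - f D' k) (x k - f D k)
        have h2 : (x k - f D' k) - (x k - f D k) = f D k - f D' k := by ring
        rw [h2] at this
        linarith
      rw [← add_div]
      gcongr
      nlinarith [mul_nonneg hε.le
        (by linarith : (0:ℝ) ≤ |x k - f D k| - (|x k - f D' k| - |f D k - f D' k|))]
    calc (∏ k, g D k (x k))
        ≤ ∏ k, (ENNReal.ofReal (Real.exp (ε * |f D k - f D' k| / Δ)) * g D' k (x k)) :=
          Finset.prod_le_prod' fun k _ => h1 k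
      _ = (∏ k, ENNReal.ofReal (Real.exp (ε * |f D k - f D' k| / Δ))) *
            ∏ k, g D' k (x k) := by rw [Finset.prod_mul_distrib]
      _ ≤ ENNReal.ofReal (Real.exp ε) * ∏ k, g D' k (x k) := by
          apply mul_le_mul_left
          rw [← ENNReal.ofReal_prod_of_nonneg (fun k _ => Real.exp_nonneg _)]
          apply ENNReal.ofReal_le_ofReal
          rw [← Real.exp_sum]
          apply Real.exp_le_exp.mpr
          have hsum : (∑ k : Fin d, ε * |f D k - f D' k| / Δ)
              = ε * (∑ k : Fin d, |f D k - f D' k|) / Δ := by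
            rw [← Finset.sum_div, ← Finset.mul_sum]
          rw [hsum, div_le_iff₀ hΔ]
          have h3 := hsens D D' hN
          nlinarith [mul_le_mul_of_nonneg_left h3 hε.le]
  -- conclude
  rw [hpi D, hpi D', withDensity_apply _ hS, withDensity_apply _ hS]
  calc ∫⁻ x in S, ∏ k, g D k (x k) ∂(Measure.pi fun _ : Fin d => (volume : Measure ℝ))
      ≤ ∫⁻ x in S, ENNReal.ofReal (Real.exp ε) * ∏ k, g D' k (x k)
          ∂(Measure.pi fun _ : Fin d => (volume : Measure ℝ)) :=
        lintegral_mono fun x => hpt x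
    _ = ENNReal.ofReal (Real.exp ε) *
          ∫⁻ x in S, ∏ k, g D' k (x k) ∂(Measure.pi fun _ : Fin d => (volume : Measure ℝ)) := by
        have hGm : Measurable fun x : Fin d → ℝ => ∏ k, g D' k (x k) :=
          Finset.measurable_prod _ fun k _ => (hgm D' k).comp (measurable_pi_apply k)
        rw [lintegral_const_mul _ hGm]
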